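/- Let G = (V, E_G) be a finite simple graph with |V| = N ≥ 2. A subset S ⊆ V maximizes AOP over all subsets of V if and only if S is a maximum independent set of G. (Core reduction claim in the proof of Theorem 3.) -/

import Mathlib

open Finset

variable {V : Type*} [Fintype V] [DecidableEq V]

/-- `β(S)`: the number of edges of `G` with both endpoints in `S`. -/
def betaCount (G : SimpleGraph V) [DecidableRel G.Adj] (S : Finset V) : ℕ :=
  (G.edgeFinset.filter (fun e => e ∈ S.sym2)).card

/-- `AOP(S) = (|S|/N) / (1 + |S|/N² + N³·β(S))` where `N = |V|`. -/
noncomputable def AOP (G : SimpleGraph V) [DecidableRel G.Adj] (S : Finset V) : ℝ :=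
  ((S.card : ℝ) / (Fintype.card V : ℝ)) /
    (1 + (S.card : ℝ) / (Fintype.card V : ℝ) ^ 2 +
      (Fintype.card V : ℝ) ^ 3 * (betaCount G S : ℝ))

lemma aop_smono (n t s : ℝ) (hn : 0 < n) (ht0 : 0 ≤ t) (hts : t < s) :
    (t/n)/(1+t/n^2) < (s/n)/(1+s/n^2) := by
  have hs0 : 0 ≤ s := le_of_lt (lt_of_le_of_lt ht0 hts)
  rw [div_lt_div_iff₀ (by positivity) (by positivity)]
  have h1 : t/n*(s/n^2) = s/n*(t/n^2) := by ring
  rw [mul_add, mul_add, mul_one, mul_one, h1]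
  have h2 : t/n < s/n := by gcongr
  linarith

lemma aop_mono (n t s : ℝ) (hn : 0 < n) (ht0 : 0 ≤ t) (hts : t ≤ s) :
    (t/n)/(1+t/n^2) ≤ (s/n)/(1+s/n^2) := by
  rcases eq_or_lt_of_le hts with rfl | h
  · exact le_rfl
  · exact le_of_lt (aop_smono n t s hn ht0 h)

lemma aop_key (n t s b : ℝ) (hn : 2 ≤ n) (ht0 : 0 ≤ t) (htn : t ≤ n)
    (hs1 : 1 ≤ s) (hb : 1 ≤ b) :
    (t/n)/(1+t/n^2+n^3*b) < (s/n)/(1+s/n^2) := by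
  have hn0 : (0:ℝ) < n := by linarith
  have hb0 : (0:ℝ) ≤ n^3*b := by positivity
  have step1 : (t/n)/(1+t/n^2+n^3*b) ≤ 1/n^3 := by
    apply div_le_div₀ (by positivity) _ (by positivity)
    · have : n^3 ≤ 1+t/n^2+n^3*b := by
        have : 0 ≤ t/n^2 := by positivity
        nlinarith [pow_pos hn0 3]
      linarith
    · calc t/n ≤ n/n := by gcongr
        _ = 1 := div_self (ne_of_gt hn0)
  have step2 : (1:ℝ)/n^3 < (1/n)/(1+1/n^2) := by
    rw [div_lt_div_iff₀ (by positivity) (by positivity)]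
    have heq : 1/n*n^3 = n^2 := by field_simp
    have h1 : 1/n^2 ≤ 1 := by rw [div_le_one (by positivity)]; nlinarith
    nlinarith
  have step3 : (1/n)/(1+1/n^2) ≤ (s/n)/(1+s/n^2) :=
    aop_mono n 1 s hn0 zero_le_one hs1
  linarith

lemma betaCount_singleton (G : SimpleGraph V) [DecidableRel G.Adj] (v : V) :
    betaCount G {v} = 0 := by
  rw [betaCount, Finset.card_eq_zero, Finset.filter_eq_empty_iff]
  intro e he
  induction e with
  | h a b =>
    simp only [SimpleGraph.mem_edgeFinset, SimpleGraph.mem_edgeSet] at he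
    simp only [Finset.mk_mem_sym2_iff, Finset.mem_singleton]
    rintro ⟨rfl, rfl⟩
    exact G.irrefl he

lemma AOP_eq_of_indep (G : SimpleGraph V) [DecidableRel G.Adj] (T : Finset V)
    (h : betaCount G T = 0) :
    AOP G T = ((T.card : ℝ) / (Fintype.card V : ℝ)) /
      (1 + (T.card : ℝ) / (Fintype.card V : ℝ) ^ 2) := by
  rw [AOP, h, Nat.cast_zero, mul_zero, add_zero]

/-- **Core reduction claim in the proof of Theorem 3.** For a finite simple graph on `N ≥ 2`
vertices, a subset `S` maximizes `AOP` over all subsets of `V` if and only if `S` is a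
maximum independent set. -/
theorem AOP_maximizer_iff_maximum_independent_set
    (G : SimpleGraph V) [DecidableRel G.Adj]
    (hN : 2 ≤ Fintype.card V) (S : Finset V) :
    (∀ T : Finset V, AOP G T ≤ AOP G S) ↔
      (betaCount G S = 0 ∧
        ∀ T : Finset V, betaCount G T = 0 → T.card ≤ S.card) := by
  set n : ℝ := (Fintype.card V : ℝ) with hn_def
  have hn2 : (2:ℝ) ≤ n := by rw [hn_def]; exact_mod_cast hN
  have hn0 : (0:ℝ) < n := by linarith
  obtain ⟨v⟩ : Nonempty V := Fintype.card_pos_iff.mp (by omega)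
  have hcard : ∀ T : Finset V, (T.card : ℝ) ≤ n := by
    intro T
    rw [hn_def]
    exact_mod_cast Finset.card_le_univ T
  constructor
  · intro h
    have hβS : betaCount G S = 0 := by
      by_contra h0
      have hb1 : (1:ℝ) ≤ (betaCount G S : ℝ) := by
        exact_mod_cast Nat.one_le_iff_ne_zero.mpr h0
      have hlt : AOP G S < AOP G {v} := by
        rw [AOP_eq_of_indep G {v} (betaCount_singleton G v), AOP, Finset.card_singleton,
          Nat.cast_one]
        exact aop_key n (S.card) 1 (betaCount G S) hn2 (by positivity) (hcard S) le_rfl hb1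
      exact absurd (h {v}) (not_le.mpr hlt)
    refine ⟨hβS, fun T hT => ?_⟩
    by_contra h0
    push_neg at h0
    have hlt : AOP G S < AOP G T := by
      rw [AOP_eq_of_indep G S hβS, AOP_eq_of_indep G T hT]
      exact aop_smono n _ _ hn0 (by positivity) (by exact_mod_cast h0)
    exact absurd (h T) (not_le.mpr hlt)
  · rintro ⟨hβS, hmax⟩ T
    have hS1 : (1:ℝ) ≤ (S.card : ℝ) := by
      have := hmax {v} (betaCount_singleton G v)
      rw [Finset.card_singleton] at this
      exact_mod_cast this
    by_cases hT : betaCount G T = 0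
    · rw [AOP_eq_of_indep G S hβS, AOP_eq_of_indep G T hT]
      exact aop_mono n _ _ hn0 (by positivity) (by exact_mod_cast hmax T hT)
    · have hb1 : (1:ℝ) ≤ (betaCount G T : ℝ) := by
        exact_mod_cast Nat.one_le_iff_ne_zero.mpr hT
      rw [AOP_eq_of_indep G S hβS, AOP]
      exact le_of_lt (aop_key n _ _ _ hn2 (by positivity) (hcard T) hS1 hb1)
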